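/- Let Σ = (G, σ) be a signed graph whose underlying simple graph G is connected and bipartite. Then Σ is balanced if and only if D^max(Σ) = D^min(Σ). -/

import Mathlib

open SimpleGraph

/-- The sign (product of edge signs) of a walk in a graph, computed along its darts. -/
def walkSign {V : Type*} {G : SimpleGraph V} (σ : V → V → ℤ) {u v : V} (p : G.Walk u v) : ℤ :=
  (p.darts.map fun d => σ d.toProd.1 d.toProd.2).prod

/-- `σ` is a signature on `G`: a symmetric function that is `±1`-valued on edges. -/
def IsSignature {V : Type*} (G : SimpleGraph V) (σ : V → V → ℤ) : Prop :=
  (∀ u v, σ u v = σ v u) ∧ ∀ u v, G.Adj u v → σ u v = 1 ∨ σ u v = -1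

/-- A signed graph is balanced when every cycle has sign `+1`. -/
def IsBalanced {V : Type*} (G : SimpleGraph V) (σ : V → V → ℤ) : Prop :=
  ∀ (u : V) (p : G.Walk u u), p.IsCycle → walkSign σ p = 1

/-- A walk is a shortest path when it is a path whose length is the graph distance
between its endpoints. -/
def IsShortestPath {V : Type*} {G : SimpleGraph V} {u v : V} (p : G.Walk u v) : Prop :=
  p.IsPath ∧ p.length = G.dist u v

open scoped Classical in
/-- `σmax u v = +1` if some shortest `u v`-path is positive, `-1` otherwise. -/
noncomputable def sigmaMax {V : Type*} (G : SimpleGraph V) (σ : V → V → ℤ) (u v : V) : ℤ :=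
  if ∃ p : G.Walk u v, IsShortestPath p ∧ walkSign σ p = 1 then 1 else -1

open scoped Classical in
/-- `σmin u v = +1` if all shortest `u v`-paths are positive, `-1` otherwise. -/
noncomputable def sigmaMin {V : Type*} (G : SimpleGraph V) (σ : V → V → ℤ) (u v : V) : ℤ :=
  if ∀ p : G.Walk u v, IsShortestPath p → walkSign σ p = 1 then 1 else -1

/-- The signed distance matrix `D^max`, with `(u,v)` entry `σmax(u,v)·d(u,v)`. -/
noncomputable def Dmax {V : Type*} (G : SimpleGraph V) (σ : V → V → ℤ) : Matrix V V ℝ :=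
  Matrix.of fun u v => (sigmaMax G σ u v : ℝ) * (G.dist u v : ℝ)

/-- The signed distance matrix `D^min`, with `(u,v)` entry `σmin(u,v)·d(u,v)`. -/
noncomputable def Dmin {V : Type*} (G : SimpleGraph V) (σ : V → V → ℤ) : Matrix V V ℝ :=
  Matrix.of fun u v => (sigmaMin G σ u v : ℝ) * (G.dist u v : ℝ)

/-- Two vertices are distance-compatible if all shortest paths between them have the
same sign. -/
def Compatible {V : Type*} (G : SimpleGraph V) (σ : V → V → ℤ) (u v : V) : Prop :=
  ∀ p q : G.Walk u v, IsShortestPath p → IsShortestPath q → walkSign σ p = walkSign σ q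

/-- A signed graph is distance-compatible if every pair of vertices is
distance-compatible. -/
def IsCompatibleGraph {V : Type*} (G : SimpleGraph V) (σ : V → V → ℤ) : Prop :=
  ∀ u v, Compatible G σ u v

/-- The largest eigenvalue of a (symmetric) real matrix: the supremum of the set of real
roots of its characteristic polynomial. -/
noncomputable def largestEigenvalue {n : Type*} [Fintype n] [DecidableEq n]
    (M : Matrix n n ℝ) : ℝ :=
  sSup {x : ℝ | M.charpoly.IsRoot x}

/-! ### Auxiliary lemmas -/

section Aux

variable {V : Type*} {G : SimpleGraph V} {σ : V → V → ℤ}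

open SimpleGraph.Walk

@[simp] lemma walkSign_nil {u : V} : walkSign σ (Walk.nil : G.Walk u u) = 1 := rfl

@[simp] lemma walkSign_cons {u v w : V} (h : G.Adj u v) (p : G.Walk v w) :
    walkSign σ (Walk.cons h p) = σ u v * walkSign σ p := by
  simp [walkSign]

lemma walkSign_append {u v w : V} (p : G.Walk u v) (q : G.Walk v w) :
    walkSign σ (p.append q) = walkSign σ p * walkSign σ q := by
  simp [walkSign, Walk.darts_append]

@[simp] lemma walkSign_copy {u v u' v' : V} (p : G.Walk u v) (hu : u = u') (hv : v = v') :
    walkSign σ (p.copy hu hv) = walkSign σ p := by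
  subst hu; subst hv; rfl

lemma walkSign_reverse (hσ : IsSignature G σ) {u v : V} (p : G.Walk u v) :
    walkSign σ p.reverse = walkSign σ p := by
  unfold walkSign
  rw [Walk.darts_reverse, List.map_reverse, List.prod_reverse, List.map_map]
  congr 1
  refine List.map_congr_left ?_
  intro d _
  exact hσ.1 d.toProd.2 d.toProd.1

lemma walkSign_unit (hσ : IsSignature G σ) {u v : V} (p : G.Walk u v) :
    walkSign σ p = 1 ∨ walkSign σ p = -1 := by
  induction p with
  | nil => left; rfl
  | cons h q ih =>
    rw [walkSign_cons]
    rcases hσ.2 _ _ h with h1 | h1 <;> rcases ih with h2 | h2 <;> rw [h1, h2] <;> norm_num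

lemma walkSign_mul_self (hσ : IsSignature G σ) {u v : V} (p : G.Walk u v) :
    walkSign σ p * walkSign σ p = 1 := by
  rcases walkSign_unit hσ p with h | h <;> rw [h] <;> norm_num

/-! #### take/drop of walks by index -/

namespace SimpleGraph.Walk

/-- The walk consisting of the first `n` darts of `p`. -/
def takeW : {u v : V} → (p : G.Walk u v) → (n : ℕ) → G.Walk u (p.getVert n)
  | _, _, p, 0 => Walk.nil.copy rfl (p.getVert_zero).symm
  | _, _, Walk.nil, _ + 1 => Walk.nil
  | _, _, Walk.cons h q, n + 1 =>
      (Walk.cons h (q.takeW n)).copy rfl (Walk.getVert_cons_succ q h).symm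

/-- The walk obtained from `p` by removing the first `n` darts. -/
def dropW : {u v : V} → (p : G.Walk u v) → (n : ℕ) → G.Walk (p.getVert n) v
  | _, _, p, 0 => p.copy (p.getVert_zero).symm rfl
  | _, _, Walk.nil, _ + 1 => Walk.nil
  | _, _, Walk.cons h q, n + 1 =>
      (q.dropW n).copy (Walk.getVert_cons_succ q h).symm rfl

@[simp] lemma takeW_zero {u v : V} (p : G.Walk u v) :
    p.takeW 0 = Walk.nil.copy rfl (p.getVert_zero).symm := by cases p <;> rfl

@[simp] lemma takeW_nil_succ {u : V} (n : ℕ) :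
    (Walk.nil : G.Walk u u).takeW (n + 1) = Walk.nil := rfl

@[simp] lemma takeW_cons_succ {u w v : V} (h : G.Adj u w) (q : G.Walk w v) (n : ℕ) :
    (Walk.cons h q).takeW (n + 1) =
      (Walk.cons h (q.takeW n)).copy rfl (Walk.getVert_cons_succ q h).symm := rfl

@[simp] lemma dropW_zero {u v : V} (p : G.Walk u v) :
    p.dropW 0 = p.copy (p.getVert_zero).symm rfl := by cases p <;> rfl

@[simp] lemma dropW_nil_succ {u : V} (n : ℕ) :
    (Walk.nil : G.Walk u u).dropW (n + 1) = Walk.nil := rfl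

@[simp] lemma dropW_cons_succ {u w v : V} (h : G.Adj u w) (q : G.Walk w v) (n : ℕ) :
    (Walk.cons h q).dropW (n + 1) =
      (q.dropW n).copy (Walk.getVert_cons_succ q h).symm rfl := rfl

lemma length_takeW {u v : V} (p : G.Walk u v) :
    ∀ n, n ≤ p.length → (p.takeW n).length = n := by
  induction p with
  | nil =>
    intro n hn
    have : n = 0 := by simpa using hn
    subst this; simp
  | cons h q ih =>
    intro n hn
    cases n with
    | zero => simp
    | succ m =>
      simp only [takeW_cons_succ, Walk.length_copy, Walk.length_cons]
      rw [ih m (by simpa using hn)]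

lemma length_dropW {u v : V} (p : G.Walk u v) :
    ∀ n, (p.dropW n).length = p.length - n := by
  induction p with
  | nil => intro n; cases n <;> simp [dropW]
  | cons h q ih =>
    intro n
    cases n with
    | zero => simp
    | succ m => simp [ih m]

lemma support_takeW {u v : V} (p : G.Walk u v) :
    ∀ n, n ≤ p.length → (p.takeW n).support = p.support.take (n + 1) := by
  induction p with
  | nil =>
    intro n hn
    have : n = 0 := by simpa using hn
    subst this; simp
  | cons h q ih =>
    intro n hn
    cases n with
    | zero => simp
    | succ m =>
      simp only [takeW_cons_succ, Walk.support_copy, Walk.support_cons, List.take_succ_cons]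
      rw [ih m (by simpa using hn)]

lemma support_dropW {u v : V} (p : G.Walk u v) :
    ∀ n, n ≤ p.length → (p.dropW n).support = p.support.drop n := by
  induction p with
  | nil =>
    intro n hn
    have : n = 0 := by simpa using hn
    subst this; simp
  | cons h q ih =>
    intro n hn
    cases n with
    | zero => simp
    | succ m =>
      simp only [dropW_cons_succ, Walk.support_copy, Walk.support_cons, List.drop_succ_cons]
      rw [ih m (by simpa using hn)]

end SimpleGraph.Walk

lemma walkSign_takeW_dropW {u v : V} (p : G.Walk u v) (n : ℕ) :
    walkSign σ (p.takeW n) * walkSign σ (p.dropW n) = walkSign σ p := by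
  induction p generalizing n with
  | nil => cases n <;> simp
  | cons h q ih =>
    cases n with
    | zero => simp
    | succ m =>
      simp only [Walk.takeW_cons_succ, Walk.dropW_cons_succ, walkSign_copy, walkSign_cons]
      rw [mul_assoc, ih m]

/-! #### Parity in bipartite graphs -/

lemma length_even_of_closed (hbip : G.Colorable 2) {u : V} (p : G.Walk u u) :
    Even p.length := by
  obtain ⟨C⟩ := hbip
  have hfin : ∀ a b : Fin 2, a ≠ b →
      (if b = 0 then (0 : ZMod 2) else 1) = (if a = 0 then (0 : ZMod 2) else 1) + 1 := by
    decide
  have key : ∀ {a b : V} (q : G.Walk a b),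
      (if C b = 0 then (0 : ZMod 2) else 1) =
        (if C a = 0 then (0 : ZMod 2) else 1) + (q.length : ZMod 2) := by
    intro a b q
    induction q with
    | nil => simp
    | cons h r ih =>
      rw [Walk.length_cons, Nat.cast_add, Nat.cast_one, ih, hfin _ _ (C.valid h)]
      ring
  have h0 : ((p.length : ℕ) : ZMod 2) = 0 := left_eq_add.mp (key p)
  rw [ZMod.natCast_eq_zero_iff] at h0
  obtain ⟨m, hm⟩ := h0
  exact ⟨m, by omega⟩

/-! #### A path cannot contain the closing edge -/

lemma edge_not_mem_of_isPath {u v : V} (q : G.Walk v u) (hq : q.IsPath) (h2 : 2 ≤ q.length) :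
    s(u, v) ∉ q.edges := by
  cases q with
  | nil => simp at h2
  | cons h r =>
    intro hmem
    rw [Walk.edges_cons, List.mem_cons] at hmem
    rcases hmem with he | he
    · rw [Sym2.eq_iff] at he
      rcases he with ⟨rfl, rfl⟩ | ⟨rfl, -⟩
      · exact (G.irrefl h).elim
      · have hr : r.IsPath := (Walk.cons_isPath_iff _ _).mp hq |>.1
        rw [Walk.isPath_iff_eq_nil] at hr
        subst hr
        simp at h2
    · have hv : v ∈ r.support := Walk.snd_mem_support_of_mem_edges r he
      exact ((Walk.cons_isPath_iff _ _).mp hq).2 hv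

/-! #### Every negative closed walk contains a negative cycle -/

lemma exists_neg_cycle (hσ : IsSignature G σ) :
    ∀ (n : ℕ) (u : V) (p : G.Walk u u), p.length ≤ n → walkSign σ p = -1 →
      ∃ (x : V) (c : G.Walk x x), c.IsCycle ∧ walkSign σ c = -1 ∧ c.length ≤ p.length := by
  classical
  intro n
  induction n with
  | zero =>
    intro u p hlen hsign
    cases p with
    | nil => rw [walkSign_nil] at hsign; norm_num at hsign
    | cons h q => simp at hlen
  | succ n ih =>
    intro u p hlen hsign
    by_cases hnd : p.support.tail.Nodup
    · -- the closed walk has internally distinct vertices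
      cases p with
      | nil => rw [walkSign_nil] at hsign; norm_num at hsign
      | cons h q =>
        have hq : q.IsPath := by
          rw [Walk.isPath_def]
          simpa using hnd
        by_cases h2 : 2 ≤ q.length
        · refine ⟨u, Walk.cons h q, ?_, hsign, le_rfl⟩
          rw [Walk.cons_isCycle_iff]
          exact ⟨hq, edge_not_mem_of_isPath q hq h2⟩
        · have hq01 : q.length = 0 ∨ q.length = 1 := by omega
          rcases hq01 with h0 | h1
          · have hyu := Walk.eq_of_length_eq_zero h0
            subst hyu
            exact (G.irrefl h).elim
          · cases q with
            | nil => simp at h1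
            | cons h' r =>
              have hr : r.length = 0 := by simpa using h1
              cases r with
              | nil =>
                rw [walkSign_cons, walkSign_cons, walkSign_nil, mul_one,
                  hσ.1 u] at hsign
                rcases hσ.2 _ _ h' with h1' | h1' <;> rw [h1'] at hsign <;> norm_num at hsign
              | cons h'' r' => simp at hr
    · -- a vertex repeats internally: split the walk
      obtain ⟨w, hw⟩ := List.exists_duplicate_iff_not_nodup.2 hnd
      have hcount : 2 ≤ p.support.tail.count w := List.duplicate_iff_two_le_count.1 hw
      by_cases hwu : w = u
      · subst hwu
        cases p with
        | nil => simp at hcount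
        | cons h q =>
          -- h : G.Adj w y, q : G.Walk y w
          have hcq : 2 ≤ q.support.count w := by simpa using hcount
          have hwq : w ∈ q.support := by
            by_contra hx
            rw [List.count_eq_zero_of_not_mem hx] at hcq
            omega
          have hspec := q.take_spec hwq
          have hc1 : (q.takeUntil w hwq).support.count w = 1 :=
            q.count_support_takeUntil_eq_one hwq
          have hsupp : q.support =
              (q.takeUntil w hwq).support ++ (q.dropUntil w hwq).support.tail := by
            conv_lhs => rw [← hspec]
            rw [Walk.support_append]
          have hw2 : w ∈ (q.dropUntil w hwq).support.tail := by
            by_contra hx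
            rw [hsupp, List.count_append, hc1, List.count_eq_zero_of_not_mem hx] at hcq
            omega
          have hq2nil : ¬ (q.dropUntil w hwq).Nil := by
            intro hnil
            rw [hnil.eq_nil] at hw2
            simp at hw2
          have hlq2 : 0 < (q.dropUntil w hwq).length :=
            Walk.not_nil_iff_lt_length.mp hq2nil
          have hlen_eq : q.length = (q.takeUntil w hwq).length + (q.dropUntil w hwq).length := by
            conv_lhs => rw [← hspec]
            rw [Walk.length_append]
          have hplen : q.length + 1 ≤ n + 1 := by simpa using hlen
          have e1 : walkSign σ (Walk.cons h q) =
              walkSign σ (Walk.cons h (q.takeUntil w hwq)) * walkSign σ (q.dropUntil w hwq) := by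
            rw [walkSign_cons, walkSign_cons,
              show walkSign σ q =
                walkSign σ (q.takeUntil w hwq) * walkSign σ (q.dropUntil w hwq) by
                  conv_lhs => rw [← hspec]
                  rw [walkSign_append]]
            ring
          rw [e1] at hsign
          have hl1 : (Walk.cons h (q.takeUntil w hwq)).length =
              (q.takeUntil w hwq).length + 1 := Walk.length_cons _ _
          rcases walkSign_unit hσ (Walk.cons h (q.takeUntil w hwq)) with s1 | s1 <;>
            rcases walkSign_unit hσ (q.dropUntil w hwq) with s2 | s2
          · rw [s1, s2] at hsign; norm_num at hsign
          · obtain ⟨x, c, hc, hcs, hcl⟩ := ih w (q.dropUntil w hwq) (by omega) s2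
            exact ⟨x, c, hc, hcs, by rw [Walk.length_cons]; omega⟩
          · obtain ⟨x, c, hc, hcs, hcl⟩ := ih w (Walk.cons h (q.takeUntil w hwq))
              (by omega) s1
            exact ⟨x, c, hc, hcs, by rw [Walk.length_cons]; omega⟩
          · rw [s1, s2] at hsign; norm_num at hsign
      · -- w ≠ u
        have hwp : w ∈ p.support := by
          rw [Walk.support_eq_cons]
          exact List.mem_cons_of_mem _ hw.mem
        have hspec := p.take_spec hwp
        have hca : (p.takeUntil w hwp).support.count w = 1 :=
          p.count_support_takeUntil_eq_one hwp
        have hsupp : p.support =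
            (p.takeUntil w hwp).support ++ (p.dropUntil w hwp).support.tail := by
          conv_lhs => rw [← hspec]
          rw [Walk.support_append]
        have hcp : 2 ≤ p.support.count w := by
          rw [Walk.support_eq_cons, List.count_cons_of_ne (Ne.symm hwu)]
          exact hcount
        have hwb : w ∈ (p.dropUntil w hwp).support.tail := by
          by_contra hx
          rw [hsupp, List.count_append, hca, List.count_eq_zero_of_not_mem hx] at hcp
          omega
        have hbnil : ¬ (p.dropUntil w hwp).Nil := Walk.not_nil_of_ne hwu
        obtain ⟨y, hb, b', hbe⟩ := Walk.not_nil_iff.mp hbnil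
        have hwb' : w ∈ b'.support := by
          rw [hbe] at hwb
          simpa using hwb
        have hspec2 := b'.take_spec hwb'
        -- the two shorter closed walks
        have e1 : walkSign σ p =
            walkSign σ (p.takeUntil w hwp) *
              (σ w y * (walkSign σ (b'.takeUntil w hwb') * walkSign σ (b'.dropUntil w hwb'))) := by
          conv_lhs => rw [← hspec]
          rw [walkSign_append, hbe, walkSign_cons,
            show walkSign σ b' =
              walkSign σ (b'.takeUntil w hwb') * walkSign σ (b'.dropUntil w hwb') by
                conv_lhs => rw [← hspec2]
                rw [walkSign_append]]
        have hprod : walkSign σ (Walk.cons hb (b'.takeUntil w hwb')) *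
            walkSign σ ((p.takeUntil w hwp).append (b'.dropUntil w hwb')) = -1 := by
          rw [walkSign_cons, walkSign_append]
          rw [e1] at hsign
          linear_combination hsign
        have hanil : ¬ (p.takeUntil w hwp).Nil :=
          Walk.not_nil_of_ne (fun h' => hwu h'.symm)
        have hla : 0 < (p.takeUntil w hwp).length := Walk.not_nil_iff_lt_length.mp hanil
        have hlp : p.length = (p.takeUntil w hwp).length +
            (1 + ((b'.takeUntil w hwb').length + (b'.dropUntil w hwb').length)) := by
          conv_lhs => rw [← hspec]
          rw [Walk.length_append, hbe, Walk.length_cons,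
            show b'.length = (b'.takeUntil w hwb').length + (b'.dropUntil w hwb').length by
              conv_lhs => rw [← hspec2]
              rw [Walk.length_append]]
          ring
        have hlC : (Walk.cons hb (b'.takeUntil w hwb')).length =
            (b'.takeUntil w hwb').length + 1 := Walk.length_cons _ _
        have hlE : ((p.takeUntil w hwp).append (b'.dropUntil w hwb')).length =
            (p.takeUntil w hwp).length + (b'.dropUntil w hwb').length := Walk.length_append _ _
        rcases walkSign_unit hσ (Walk.cons hb (b'.takeUntil w hwb')) with s1 | s1 <;>
          rcases walkSign_unit hσ ((p.takeUntil w hwp).append (b'.dropUntil w hwb')) with s2 | s2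
        · rw [s1, s2] at hprod; norm_num at hprod
        · obtain ⟨x, c, hc, hcs, hcl⟩ := ih u _ (by omega) s2
          exact ⟨x, c, hc, hcs, by omega⟩
        · obtain ⟨x, c, hc, hcs, hcl⟩ := ih w _ (by omega) s1
          exact ⟨x, c, hc, hcs, by omega⟩
        · rw [s1, s2] at hprod; norm_num at hprod

lemma balanced_closed (hσ : IsSignature G σ) (hb : IsBalanced G σ) {u : V} (p : G.Walk u u) :
    walkSign σ p = 1 := by
  rcases walkSign_unit hσ p with s | s
  · exact s
  · obtain ⟨x, c, hc, hcs, -⟩ := exists_neg_cycle hσ p.length u p le_rfl s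
    have h1 := hb x c hc
    rw [h1] at hcs
    norm_num at hcs

lemma walk_sign_eq (hσ : IsSignature G σ) (hb : IsBalanced G σ) {u v : V}
    (p q : G.Walk u v) : walkSign σ p = walkSign σ q := by
  have h1 : walkSign σ (p.append q.reverse) = 1 := balanced_closed hσ hb _
  rw [walkSign_append, walkSign_reverse hσ] at h1
  rcases walkSign_unit hσ p with s | s <;> rcases walkSign_unit hσ q with s' | s' <;>
    rw [s, s'] at h1 ⊢ <;> first | rfl | (norm_num at h1)

end Aux

/-- A signed graph whose underlying simple graph is connected and
bipartite is balanced if and only if `D^max(Σ) = D^min(Σ)`. -/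
theorem bipartite_balanced_iff_Dmax_eq_Dmin {V : Type*} (G : SimpleGraph V)
    (σ : V → V → ℤ) (hσ : IsSignature G σ) (hG : G.Connected)
    (hbip : G.Colorable 2) :
    IsBalanced G σ ↔ Dmax G σ = Dmin G σ := by
  classical
  constructor
  · -- balanced → matrices equal
    intro hb
    ext u v
    have hsig : sigmaMax G σ u v = sigmaMin G σ u v := by
      unfold sigmaMax sigmaMin
      by_cases hc : ∀ p : G.Walk u v, IsShortestPath p → walkSign σ p = 1
      · obtain ⟨p0, hp0, hl0⟩ := hG.exists_path_of_dist u v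
        rw [if_pos ⟨p0, ⟨hp0, hl0⟩, hc p0 ⟨hp0, hl0⟩⟩, if_pos hc]
      · rw [if_neg, if_neg hc]
        rintro ⟨p, hp, hs⟩
        exact hc (fun q hq => (walk_sign_eq hσ hb q p).trans hs)
    simp [Dmax, Dmin, hsig]
  · intro hD
    -- first, all shortest paths between two distinct vertices have the same sign
    have compat : ∀ u v : V, u ≠ v → Compatible G σ u v := by
      intro u v huv p q hp hq
      have hdd : (sigmaMax G σ u v : ℝ) * (G.dist u v : ℝ) =
          (sigmaMin G σ u v : ℝ) * (G.dist u v : ℝ) := by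
        have : Dmax G σ u v = Dmin G σ u v := by rw [hD]
        simpa [Dmax, Dmin] using this
      have hdpos : 0 < G.dist u v := hG.pos_dist_of_ne huv
      have hd0 : ((G.dist u v : ℕ) : ℝ) ≠ 0 := Nat.cast_ne_zero.mpr (by omega)
      have hs : sigmaMax G σ u v = sigmaMin G σ u v := by
        have := mul_right_cancel₀ hd0 hdd
        exact_mod_cast this
      by_contra hne
      rcases walkSign_unit hσ p with s1 | s1 <;> rcases walkSign_unit hσ q with s2 | s2
      · rw [s1, s2] at hne; exact hne rfl
      · have hmax : sigmaMax G σ u v = 1 := by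
          unfold sigmaMax; exact if_pos ⟨p, hp, s1⟩
        have hmin : sigmaMin G σ u v = -1 := by
          unfold sigmaMin
          refine if_neg ?_
          intro hall
          rw [hall q hq] at s2
          norm_num at s2
        rw [hmax, hmin] at hs; norm_num at hs
      · have hmax : sigmaMax G σ u v = 1 := by
          unfold sigmaMax; exact if_pos ⟨q, hq, s2⟩
        have hmin : sigmaMin G σ u v = -1 := by
          unfold sigmaMin
          refine if_neg ?_
          intro hall
          rw [hall p hp] at s1
          norm_num at s1
        rw [hmax, hmin] at hs; norm_num at hs
      · rw [s1, s2] at hne; exact hne rfl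
    -- suppose not balanced: take a minimal negative cycle
    by_contra hnb
    unfold IsBalanced at hnb
    push_neg at hnb
    obtain ⟨u0, p0, hp0, hs0⟩ := hnb
    have hs0' : walkSign σ p0 = -1 := (walkSign_unit hσ p0).resolve_left hs0
    have hex : ∃ n : ℕ, ∃ (x : V) (c : G.Walk x x),
        c.IsCycle ∧ walkSign σ c = -1 ∧ c.length = n :=
      ⟨p0.length, u0, p0, hp0, hs0', rfl⟩
    obtain ⟨x, c, hcyc, hcs, hclen⟩ := Nat.find_spec hex
    have hmin : ∀ m, m < Nat.find hex → ¬ ∃ (x : V) (c : G.Walk x x),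
        c.IsCycle ∧ walkSign σ c = -1 ∧ c.length = m := fun m hm => Nat.find_min hex hm
    -- the cycle has even length 2k with k ≥ 2
    obtain ⟨k, hk⟩ := length_even_of_closed hbip c
    have h3 : 3 ≤ c.length := hcyc.three_le_length
    have hk2 : 2 ≤ k := by omega
    have hkle : k ≤ c.length := by omega
    -- split the cycle into two arcs of length k
    set z := c.getVert k with hz
    have hla : (c.takeW k).length = k := c.length_takeW k hkle
    have hlb : (c.dropW k).length = k := by rw [c.length_dropW k]; omega
    have hsab : walkSign σ (c.takeW k) * walkSign σ (c.dropW k) = -1 := by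
      rw [walkSign_takeW_dropW, hcs]
    have ht : c.support.tail.Nodup := hcyc.2
    have hsa : (c.takeW k).support = c.support.take (k + 1) := c.support_takeW k hkle
    have hsb : (c.dropW k).support = c.support.drop k := c.support_dropW k hkle
    -- the second arc is a path
    obtain ⟨m, rfl⟩ : ∃ m, k = m + 1 := ⟨k - 1, by omega⟩
    have hbp : (c.dropW (m + 1)).IsPath := by
      rw [SimpleGraph.Walk.isPath_def, hsb, c.support_eq_cons, List.drop_succ_cons]
      exact ht.sublist (List.drop_sublist m _)
    have hzx : z ≠ x := by
      intro hzx'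
      have hnil : (c.dropW (m + 1)).copy hzx' rfl = Walk.nil :=
        (SimpleGraph.Walk.isPath_iff_eq_nil).mp
          ((SimpleGraph.Walk.isPath_copy _ hzx' rfl).mpr hbp)
      have h0 : (c.dropW (m + 1)).length = 0 := by
        have := congrArg SimpleGraph.Walk.length hnil
        simpa using this
      omega
    have hxb : x ∈ (c.dropW (m + 1)).support.tail := by
      have hxs : x ∈ (c.dropW (m + 1)).support := SimpleGraph.Walk.end_mem_support _
      rw [(c.dropW (m + 1)).support_eq_cons] at hxs
      rcases List.mem_cons.mp hxs with h' | h'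
      · exact (hzx h'.symm).elim
      · exact h'
    have hxdrop : x ∈ c.support.tail.drop (m + 1) := by
      have e2 : (c.dropW (m + 1)).support.tail = c.support.tail.drop (m + 1) := by
        rw [hsb, List.tail_drop]
        conv_lhs => rw [c.support_eq_cons, List.drop_succ_cons]
      rwa [e2] at hxb
    have hxtake : x ∉ c.support.tail.take (m + 1) :=
      fun hx => (List.disjoint_take_drop ht le_rfl) hx hxdrop
    have hap : (c.takeW (m + 1)).IsPath := by
      rw [SimpleGraph.Walk.isPath_def, hsa, c.support_eq_cons, List.take_succ_cons]
      exact List.nodup_cons.2 ⟨hxtake, ht.sublist (List.take_sublist _ _)⟩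
    -- compare with the graph distance between the two antipodal vertices
    have hdle : G.dist x z ≤ m + 1 := by
      have h' := SimpleGraph.dist_le (c.takeW (m + 1))
      rw [hla] at h'
      exact h'
    rcases eq_or_lt_of_le hdle with hdeq | hdlt
    · -- distance equals k: both arcs are shortest paths with different signs
      have hsp_a : IsShortestPath (c.takeW (m + 1)) := ⟨hap, by rw [hla, hdeq]⟩
      have hsp_b : IsShortestPath (c.dropW (m + 1)).reverse := by
        refine ⟨hbp.reverse, ?_⟩
        rw [SimpleGraph.Walk.length_reverse, hlb, hdeq]
      have heq := compat x z (fun h' => hzx h'.symm) (c.takeW (m + 1))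
        (c.dropW (m + 1)).reverse hsp_a hsp_b
      rw [walkSign_reverse hσ] at heq
      rcases walkSign_unit hσ (c.takeW (m + 1)) with s | s <;>
        rcases walkSign_unit hσ (c.dropW (m + 1)) with s' | s' <;>
          rw [s, s'] at hsab heq <;> omega
    · -- distance smaller than k: produce a shorter negative cycle
      obtain ⟨P, hPp, hPl⟩ := hG.exists_path_of_dist x z
      have hprod : walkSign σ ((c.takeW (m + 1)).append P.reverse) *
          walkSign σ (P.append (c.dropW (m + 1))) = -1 := by
        rw [walkSign_append, walkSign_append, walkSign_reverse hσ]
        rcases walkSign_unit hσ P with s | s <;> rw [s] <;> linear_combination hsab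
      have hl1 : ((c.takeW (m + 1)).append P.reverse).length = (m + 1) + G.dist x z := by
        rw [SimpleGraph.Walk.length_append, SimpleGraph.Walk.length_reverse, hla, hPl]
      have hl2 : (P.append (c.dropW (m + 1))).length = G.dist x z + (m + 1) := by
        rw [SimpleGraph.Walk.length_append, hlb, hPl]
      rcases walkSign_unit hσ ((c.takeW (m + 1)).append P.reverse) with s | s
      · rw [s, one_mul] at hprod
        obtain ⟨x', c', hc', hcs', hcl'⟩ :=
          exists_neg_cycle hσ (P.append (c.dropW (m + 1))).length x _ le_rfl hprod
        exact hmin c'.length (by omega) ⟨x', c', hc', hcs', rfl⟩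
      · obtain ⟨x', c', hc', hcs', hcl'⟩ :=
          exists_neg_cycle hσ ((c.takeW (m + 1)).append P.reverse).length x _ le_rfl s
        exact hmin c'.length (by omega) ⟨x', c', hc', hcs', rfl⟩
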